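/- Let F : ℂ → ℂ be complex-differentiable on the open unit ball {z : ℂ | ‖z‖ < 1} and not identically zero on it. Then the circle integrals of log|F|² against dz̄ around the origin tend to zero: the function ε ↦ ∫_{θ ∈ (0,2π)} ((Real.log ((Complex.abs (F(ε·exp(I·θ))))^2) : ℂ)) · (−I·ε·exp(−I·θ)) dθ tends to 0 as ε → 0⁺. -/

import Mathlib

open MeasureTheory Filter Topology

/-- For `F : ℂ → ℂ` holomorphic on the open unit ball and not identically
zero there, the circle integrals of `log |F|²` against `dz̄` around the origin tend to
`0` as the radius `ε → 0⁺`. -/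
theorem stmt_11 (F : ℂ → ℂ)
    (hF : DifferentiableOn ℂ F {z : ℂ | ‖z‖ < 1})
    (hne : ∃ z : ℂ, ‖z‖ < 1 ∧ F z ≠ 0) :
    Tendsto (fun ε : ℝ =>
        ∫ θ in Set.Ioo (0 : ℝ) (2 * Real.pi),
          ((Real.log (‖F ((ε : ℂ) * Complex.exp (Complex.I * (θ : ℂ)))‖ ^ 2) : ℂ)) *
            (-Complex.I * (ε : ℂ) * Complex.exp (-Complex.I * (θ : ℂ))))
      (𝓝[>] (0 : ℝ)) (𝓝 0) := by
  have hball : {z : ℂ | ‖z‖ < 1} = Metric.ball (0 : ℂ) 1 := by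
    ext z; simp [Metric.mem_ball, Complex.dist_eq]
  have han : AnalyticOnNhd ℂ F (Metric.ball 0 1) :=
    (hball ▸ hF).analyticOnNhd Metric.isOpen_ball
  have h0 : AnalyticAt ℂ F 0 := han 0 (by simp)
  have hord : analyticOrderAt F 0 ≠ ⊤ := by
    intro h
    rw [analyticOrderAt_eq_top] at h
    obtain ⟨z, hz, hzne⟩ := hne
    exact hzne (han.eqOn_zero_of_preconnected_of_eventuallyEq_zero
      (convex_ball (0:ℂ) 1).isPreconnected (by simp) h
      (by simpa [Metric.mem_ball, Complex.dist_eq] using hz))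
  obtain ⟨n, hn⟩ : ∃ m : ℕ, analyticOrderAt F 0 = m := by
    lift analyticOrderAt F 0 to ℕ using hord with m hm; exact ⟨m, rfl⟩
  obtain ⟨g, hg, hg0, hfg⟩ := h0.analyticOrderAt_eq_natCast.mp hn
  -- combine eventual facts
  have hev : ∀ᶠ z in 𝓝 (0 : ℂ), F z = z ^ n * g z ∧ g z ≠ 0 ∧ ContinuousAt g z := by
    filter_upwards [hfg, hg.continuousAt.eventually_ne hg0,
      hg.eventually_analyticAt] with z h1 h2 h3
    exact ⟨by simpa [smul_eq_mul] using h1, h2, h3.continuousAt⟩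
  obtain ⟨δ, hδ, hδball⟩ := Metric.eventually_nhds_iff.mp hev
  set ε₀ := δ / 2 with hε₀def
  have hε₀ : 0 < ε₀ := by positivity
  have hsub : ∀ z : ℂ, ‖z‖ ≤ ε₀ → F z = z ^ n * g z ∧ g z ≠ 0 ∧ ContinuousAt g z := by
    intro z hz
    exact hδball (by simpa [Complex.dist_eq] using lt_of_le_of_lt hz (by linarith))
  -- bound for log |g|^2 on the closed ball
  have hcont : ContinuousOn (fun z : ℂ => Real.log (‖g z‖ ^ 2))
      (Metric.closedBall 0 ε₀) := by
    intro z hz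
    have hz' : ‖z‖ ≤ ε₀ := by simpa [Complex.dist_eq] using hz
    obtain ⟨-, h2, h3⟩ := hsub z hz'
    have hcg : ContinuousAt (fun z : ℂ => ‖g z‖ ^ 2) z := by
      exact h3.norm.pow 2
    exact (hcg.log (pow_ne_zero 2 (norm_ne_zero_iff.mpr h2))).continuousWithinAt
  obtain ⟨C, hC⟩ := (isCompact_closedBall (0:ℂ) ε₀).exists_bound_of_continuousOn hcont
  have hC0 : 0 ≤ C := le_trans (norm_nonneg _) (hC 0 (Metric.mem_closedBall_self hε₀.le))
  set B : ℝ → ℝ := fun ε => (2 * (n : ℝ) * |Real.log ε| + C) * ε * (2 * Real.pi) with hBdef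
  have hB : Tendsto B (𝓝[>] (0 : ℝ)) (𝓝 0) := by
    have h1 : Tendsto (fun ε : ℝ => |Real.log ε| * ε) (𝓝[>] (0 : ℝ)) (𝓝 0) := by
      have h' : Tendsto (fun x : ℝ => |Real.log x * x ^ (1 : ℝ)|) (𝓝[>] (0 : ℝ)) (𝓝 0) := by
        simpa using (tendsto_log_mul_rpow_nhdsGT_zero one_pos).abs
      refine h'.congr' ?_
      filter_upwards [self_mem_nhdsWithin] with x hx
      have hx : (0 : ℝ) < x := hx
      rw [Real.rpow_one, abs_mul, abs_of_pos hx]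
    have h2 : Tendsto (fun ε : ℝ => ε) (𝓝[>] (0 : ℝ)) (𝓝 0) :=
      tendsto_id.mono_left nhdsWithin_le_nhds
    have h3 := ((h1.const_mul (2 * (n : ℝ))).add (h2.const_mul C)).mul_const (2 * Real.pi)
    simp only [mul_zero, zero_mul, zero_add, add_zero] at h3
    refine h3.congr fun ε => ?_
    simp only [hBdef]; ring
  refine squeeze_zero_norm' ?_ hB
  filter_upwards [Ioo_mem_nhdsGT_of_mem (Set.left_mem_Ico.mpr (lt_min hε₀ one_pos))]
    with ε hε
  obtain ⟨hε1, hε2⟩ := hε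
  have hεε₀ : ε ≤ ε₀ := le_of_lt (lt_of_lt_of_le hε2 (min_le_left _ _))
  have key : ∀ θ ∈ Set.uIoc (0 : ℝ) (2 * Real.pi),
      ‖((Real.log (‖F ((ε : ℂ) * Complex.exp (Complex.I * (θ : ℂ)))‖ ^ 2) : ℂ)) *
        (-Complex.I * (ε : ℂ) * Complex.exp (-Complex.I * (θ : ℂ)))‖
      ≤ (2 * (n : ℝ) * |Real.log ε| + C) * ε := by
    intro θ _
    set z : ℂ := (ε : ℂ) * Complex.exp (Complex.I * (θ : ℂ)) with hzdef
    have hz : ‖z‖ = ε := by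
      rw [hzdef, norm_mul, Complex.norm_exp]
      simp [abs_of_pos hε1]
    obtain ⟨hF1, hg1, -⟩ := hsub z (by rw [hz]; exact hεε₀)
    have hzmem : z ∈ Metric.closedBall (0 : ℂ) ε₀ := by
      simpa [Complex.dist_eq, hz] using hεε₀
    have hlog : Real.log (‖F z‖ ^ 2)
        = 2 * (n : ℝ) * Real.log ε + Real.log (‖g z‖ ^ 2) := by
      rw [hF1, norm_mul, norm_pow, hz, mul_pow,
        Real.log_mul (by positivity) (pow_ne_zero 2 (norm_ne_zero_iff.mpr hg1)),
        ← pow_mul, Real.log_pow]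
      push_cast; ring
    have hnorm2 : ‖-Complex.I * (ε : ℂ) * Complex.exp (-Complex.I * (θ : ℂ))‖ = ε := by
      rw [norm_mul, norm_mul, Complex.norm_exp]
      simp [abs_of_pos hε1]
    rw [norm_mul, Complex.norm_real, Real.norm_eq_abs, hnorm2, hlog]
    have hb : |2 * (n : ℝ) * Real.log ε + Real.log (‖g z‖ ^ 2)|
        ≤ 2 * (n : ℝ) * |Real.log ε| + C := by
      refine le_trans (abs_add_le _ _) (add_le_add ?_ ?_)
      · rw [abs_mul]
        have : |2 * (n : ℝ)| = 2 * (n : ℝ) := abs_of_nonneg (by positivity)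
        rw [this]
      · have h4 := hC z hzmem
        rwa [Real.norm_eq_abs] at h4
    exact mul_le_mul_of_nonneg_right hb hε1.le
  have hconv : (∫ θ in Set.Ioo (0 : ℝ) (2 * Real.pi),
        ((Real.log (‖F ((ε : ℂ) * Complex.exp (Complex.I * (θ : ℂ)))‖ ^ 2) : ℂ)) *
          (-Complex.I * (ε : ℂ) * Complex.exp (-Complex.I * (θ : ℂ))))
      = ∫ θ in (0 : ℝ)..(2 * Real.pi),
        ((Real.log (‖F ((ε : ℂ) * Complex.exp (Complex.I * (θ : ℂ)))‖ ^ 2) : ℂ)) *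
          (-Complex.I * (ε : ℂ) * Complex.exp (-Complex.I * (θ : ℂ))) := by
    rw [intervalIntegral.integral_of_le Real.two_pi_pos.le,
      MeasureTheory.integral_Ioc_eq_integral_Ioo]
  calc ‖∫ θ in Set.Ioo (0 : ℝ) (2 * Real.pi),
        ((Real.log (‖F ((ε : ℂ) * Complex.exp (Complex.I * (θ : ℂ)))‖ ^ 2) : ℂ)) *
          (-Complex.I * (ε : ℂ) * Complex.exp (-Complex.I * (θ : ℂ)))‖
      ≤ ((2 * (n : ℝ) * |Real.log ε| + C) * ε) * |2 * Real.pi - 0| := by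
        rw [hconv]
        exact intervalIntegral.norm_integral_le_of_norm_le_const key
    _ = B ε := by
        rw [sub_zero, abs_of_pos Real.two_pi_pos]
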